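/- Suppose M* is an elementary extension of a structure M with definable Skolem functions, and (I, <) with I ⊆ M* \ M is a set of tight indiscernibles generating M* over M, where I is isomorphic to the ordered set ℤ of integers. Then the map α sending f(i₁,…,iₙ) to f(i₁+1,…,iₙ+1) (for parametrically M-definable f and i₁ < … < iₙ in I) is a well-defined automorphism of M* that fixes every element of M, and moreover every finite iterate αᵏ (k ≥ 1) moves every element of M* \ M. -/

import Mathlib

open FirstOrder Language

/-- `f : N^k → N` is parametrically definable (over the parameter set `A`). -/
def ParamDefFun (L : Language) {N : Type*} [L.Structure N] (A : Set N) (k : ℕ)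
    (f : (Fin k → N) → N) : Prop :=
  Set.Definable A L {x : Fin (k + 1) → N | x (Fin.last k) = f (fun i => x i.castSucc)}

/-- `(ι,<)`, presented by `e : ι → N`, is a set of order indiscernibles over the
parameter set `A`: any two increasing tuples satisfy the same formulas with
parameters from `A`. -/
def OrderIndisc (L : Language) {N : Type*} [L.Structure N] (A : Set N)
    {ι : Type*} [LinearOrder ι] (e : ι → N) : Prop :=
  ∀ (k : ℕ) (φ : (L[[↥A]]).Formula (Fin k)) (i j : Fin k → ι),
    StrictMono i → StrictMono j → (φ.Realize (e ∘ i) ↔ φ.Realize (e ∘ j))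

/-- Property (2) of tight indiscernibles: `N` is generated over `A` by the image of `e`,
via parametrically `A`-definable functions applied to increasing tuples. -/
def GeneratedBy (L : Language) {N : Type*} [L.Structure N] (A : Set N)
    {ι : Type*} [LinearOrder ι] (e : ι → N) : Prop :=
  ∀ a : N, ∃ (k : ℕ) (f : (Fin k → N) → N), ParamDefFun L A k f ∧
    ∃ i : Fin k → ι, StrictMono i ∧ f (e ∘ i) = a

/-- Property (3) of tight indiscernibles: if a parametrically `A`-definable function takes
the same value at two increasing tuples, the second lying entirely above the first, then
that common value lies in `A`. -/
def TightProp (L : Language) {N : Type*} [L.Structure N] (A : Set N)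
    {ι : Type*} [LinearOrder ι] (e : ι → N) : Prop :=
  ∀ (k : ℕ) (f : (Fin k → N) → N), ParamDefFun L A k f →
    ∀ i j : Fin k → ι, StrictMono i → StrictMono j → (∀ a b, i a < j b) →
      f (e ∘ i) = f (e ∘ j) → f (e ∘ i) ∈ A

/-- `A` has definable Skolem functions (realized in `N`). -/
def HasDefSkolem (L : Language) {N : Type*} [L.Structure N] (A : Set N) : Prop :=
  ∀ (n : ℕ) (φ : (L[[↥A]]).Formula (Fin (n + 1))), ∃ f : (Fin n → N) → N,
    ParamDefFun L A n f ∧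
      ∀ x : Fin n → N, (∃ b, φ.Realize (Fin.snoc x b)) → φ.Realize (Fin.snoc x (f x))

section AuxStmt11

variable {L : Language} {N : Type*} [L.Structure N] {A : Set N} {e : ℤ → N}

/-- A set cut out by an `L`-formula is `A`-definable. -/
lemma Stmt11.definable_of_formula {α : Type*} (φ : L.Formula α) :
    A.Definable L (setOf φ.Realize) :=
  ⟨(L.lhomWithConstants A).onFormula φ, ((L.lhomWithConstants A).setOf_realize_onFormula φ).symm⟩

/-- Reindexing a parametrically definable function gives a definable function. -/
lemma Stmt11.ParamDefFun.reindex {k n : ℕ} {f : (Fin k → N) → N} (hf : ParamDefFun L A k f)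
    (σ : Fin k → Fin n) : ParamDefFun L A n (fun v => f (v ∘ σ)) := by
  have h := hf.preimage_comp
    (Fin.snoc (fun a => (σ a).castSucc) (Fin.last n) : Fin (k + 1) → Fin (n + 1))
  unfold ParamDefFun
  convert h using 1
  ext x
  simp [Function.comp_def]

/-- Coordinate projections are parametrically definable. -/
lemma Stmt11.paramDefFun_proj {n : ℕ} (j : Fin n) : ParamDefFun L A n (fun v => v j) := by
  have h := Stmt11.definable_of_formula (A := A)
    (Term.equal (var (Fin.last n)) (var j.castSucc) : L.Formula (Fin (n + 1)))
  unfold ParamDefFun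
  convert h using 1
  rfl

/-- Master composition lemma: definable conditions on tuples of definable functions are
definable. -/
lemma Stmt11.definable_comp {n c : ℕ} {g : Fin c → ((Fin n → N) → N)}
    (hg : ∀ u, ParamDefFun L A n (g u)) {s : Set (Fin c → N)} (hs : A.Definable L s) :
    A.Definable L {v : Fin n → N | (fun u => g u v) ∈ s} := by
  classical
  set r : Fin c → (Fin (n + 1) → Fin (n + c)) :=
    fun u => Fin.snoc (Fin.castAdd c) (Fin.natAdd n u) with hr
  have hbig : A.Definable L
      ((⋂ u, (fun x : Fin (n + c) → N => x ∘ r u) ⁻¹'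
        {x : Fin (n + 1) → N | x (Fin.last n) = g u (fun a => x a.castSucc)}) ∩
        ((fun x : Fin (n + c) → N => x ∘ Fin.natAdd n) ⁻¹' s)) := by
    apply Set.Definable.inter
    · have h := Set.definable_biInter_finset
        (f := fun u => (fun x : Fin (n + c) → N => x ∘ r u) ⁻¹'
          {x : Fin (n + 1) → N | x (Fin.last n) = g u (fun a => x a.castSucc)})
        (fun u => (hg u).preimage_comp (r u)) Finset.univ
      simpa using h
    · exact hs.preimage_comp _
  have himg := hbig.image_comp (Fin.castAdd c)
  have heq : {v : Fin n → N | (fun u => g u v) ∈ s}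
      = (fun x : Fin (n + c) → N => x ∘ Fin.castAdd c) ''
        ((⋂ u, (fun x : Fin (n + c) → N => x ∘ r u) ⁻¹'
          {x : Fin (n + 1) → N | x (Fin.last n) = g u (fun a => x a.castSucc)}) ∩
          ((fun x : Fin (n + c) → N => x ∘ Fin.natAdd n) ⁻¹' s)) := by
    ext v
    simp only [Set.mem_setOf_eq, Set.mem_image, Set.mem_inter_iff, Set.mem_iInter,
      Set.mem_preimage, Function.comp_def, hr, Fin.snoc_last, Fin.snoc_castSucc]
    constructor
    · intro hv
      refine ⟨Fin.append v (fun u => g u v), ⟨fun u => ?_, ?_⟩, ?_⟩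
      · simp [Fin.append_left, Fin.append_right]
      · simpa [Fin.append_left, Fin.append_right] using hv
      · ext a; simp [Fin.append_left]
    · rintro ⟨x, ⟨h1, h2⟩, rfl⟩
      have : (fun u => g u (fun a => x (Fin.castAdd c a))) = fun u => x (Fin.natAdd n u) := by
        ext u; exact (h1 u).symm
      rw [this]; exact h2
  rw [heq]; exact himg

/-- Transfer a definable condition between increasing tuples of indiscernibles. -/
lemma Stmt11.definable_transfer (hind : OrderIndisc L A e) {n : ℕ} {s : Set (Fin n → N)}
    (hs : A.Definable L s) {i j : Fin n → ℤ} (hi : StrictMono i) (hj : StrictMono j) :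
    e ∘ i ∈ s ↔ e ∘ j ∈ s := by
  obtain ⟨φ, rfl⟩ := hs
  exact hind n φ i j hi hj

/-- Equality of values of two definable functions is a definable condition. -/
lemma Stmt11.definable_eqSet {n : ℕ} {F G : (Fin n → N) → N}
    (hF : ParamDefFun L A n F) (hG : ParamDefFun L A n G) :
    A.Definable L {v : Fin n → N | F v = G v} := by
  have hs0 : A.Definable L {y : Fin 2 → N | y 0 = y 1} := by
    have h := Stmt11.definable_of_formula (A := A)
      (Term.equal (var 0) (var 1) : L.Formula (Fin 2))
    convert h using 1
    rfl
  have h := Stmt11.definable_comp (g := ![F, G]) (fun u => by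
    fin_cases u
    · simpa using hF
    · simpa using hG) hs0
  convert h using 1
  rfl

/-- Applying a function symbol to definable functions gives a definable function. -/
lemma Stmt11.paramDefFun_funMap {n c : ℕ} (Fn : L.Functions c) {g : Fin c → ((Fin n → N) → N)}
    (hg : ∀ u, ParamDefFun L A n (g u)) :
    ParamDefFun L A n (fun v => Structure.funMap Fn (fun u => g u v)) := by
  have hs' : A.Definable L
      {y : Fin (c + 1) → N | y (Fin.last c) = Structure.funMap Fn (fun u => y u.castSucc)} := by
    have h := Stmt11.definable_of_formula (A := A)
      (Term.equal (var (Fin.last c)) (func Fn (fun u => var u.castSucc)) : L.Formula (Fin (c + 1)))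
    convert h using 1
    rfl
  set gext : Fin (c + 1) → ((Fin (n + 1) → N) → N) :=
    Fin.snoc (fun u (w : Fin (n + 1) → N) => g u (fun a => w a.castSucc))
      (fun w => w (Fin.last n)) with hgext
  have hge : ∀ u : Fin (c + 1), ParamDefFun L A (n + 1) (gext u) := by
    intro u
    refine Fin.lastCases ?_ ?_ u
    · have h := Stmt11.paramDefFun_proj (L := L) (A := A) (Fin.last n)
      simpa [hgext, Fin.snoc_last] using h
    · intro u'
      have h := Stmt11.ParamDefFun.reindex (hg u') (Fin.castSucc : Fin n → Fin (n + 1))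
      simpa [hgext, Fin.snoc_castSucc, Function.comp_def] using h
  have h := Stmt11.definable_comp hge hs'
  unfold ParamDefFun
  convert h using 1
  ext w
  simp [hgext, Fin.snoc_last, Fin.snoc_castSucc]

/-- Key well-definedness lemma: shifting indiscernibles preserves equalities between
values of definable functions. -/
lemma Stmt11.shift_eq (hind : OrderIndisc L A e) {k l : ℕ}
    {f : (Fin k → N) → N} {g : (Fin l → N) → N}
    (hf : ParamDefFun L A k f) (hg : ParamDefFun L A l g)
    {i : Fin k → ℤ} {j : Fin l → ℤ} (hi : StrictMono i) (hj : StrictMono j)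
    (h : f (e ∘ i) = g (e ∘ j)) (c : ℤ) :
    f (e ∘ fun a => i a + c) = g (e ∘ fun a => j a + c) := by
  classical
  set T : Finset ℤ := Finset.image i Finset.univ ∪ Finset.image j Finset.univ with hT
  set m : Fin T.card → ℤ := fun a => ((T.orderIsoOfFin rfl a : ℤ)) with hmdef
  have hm : StrictMono m := fun a b hab => by
    exact_mod_cast (T.orderIsoOfFin rfl).strictMono hab
  have hσ : ∀ a : Fin k, ∃ b, m b = i a := fun a =>
    ⟨(T.orderIsoOfFin rfl).symm ⟨i a, by simp [hT]⟩, by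
      show ((T.orderIsoOfFin rfl) ((T.orderIsoOfFin rfl).symm ⟨i a, by simp [hT]⟩) : ℤ) = i a
      rw [OrderIso.apply_symm_apply]⟩
  have hτ : ∀ a : Fin l, ∃ b, m b = j a := fun a =>
    ⟨(T.orderIsoOfFin rfl).symm ⟨j a, by simp [hT]⟩, by
      show ((T.orderIsoOfFin rfl) ((T.orderIsoOfFin rfl).symm ⟨j a, by simp [hT]⟩) : ℤ) = j a
      rw [OrderIso.apply_symm_apply]⟩
  choose σ hσ using hσ
  choose τ hτ using hτ
  have hdef : A.Definable L {v : Fin T.card → N | f (v ∘ σ) = g (v ∘ τ)} :=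
    Stmt11.definable_eqSet (Stmt11.ParamDefFun.reindex hf σ) (Stmt11.ParamDefFun.reindex hg τ)
  have hshift : StrictMono (fun a => m a + c) := fun a b hab => by
    simpa using hm hab
  have htrans := Stmt11.definable_transfer hind hdef hm hshift
  have h1 : e ∘ i = (e ∘ m) ∘ σ := by ext a; simp [hσ a]
  have h2 : e ∘ j = (e ∘ m) ∘ τ := by ext a; simp [hτ a]
  have hmem : (e ∘ m) ∈ {v : Fin T.card → N | f (v ∘ σ) = g (v ∘ τ)} := by
    rw [Set.mem_setOf_eq, ← h1, ← h2]
    exact h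
  have hmem2 := htrans.mp hmem
  rw [Set.mem_setOf_eq] at hmem2
  have h3 : (e ∘ fun a => i a + c) = (e ∘ fun a => m a + c) ∘ σ := by
    ext a; simp [← hσ a]
  have h4 : (e ∘ fun a => j a + c) = (e ∘ fun a => m a + c) ∘ τ := by
    ext a; simp [← hτ a]
  rw [h3, h4]
  exact hmem2

/-- Merging finitely many tuples of indices into one increasing tuple. -/
lemma Stmt11.merge_tuples {n : ℕ} {k : Fin n → ℕ} (i : ∀ t, Fin (k t) → ℤ) :
    ∃ (n' : ℕ) (m : Fin n' → ℤ), StrictMono m ∧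
      ∀ t, ∃ σ : Fin (k t) → Fin n', ∀ a, m (σ a) = i t a := by
  classical
  set T : Finset ℤ := Finset.univ.biUnion (fun t => Finset.image (i t) Finset.univ) with hT
  refine ⟨T.card, fun a => ((T.orderIsoOfFin rfl a : ℤ)), ?_, ?_⟩
  · intro a b hab; exact_mod_cast (T.orderIsoOfFin rfl).strictMono hab
  · intro t
    have hmem : ∀ a, i t a ∈ T := by
      intro a
      simp only [hT, Finset.mem_biUnion, Finset.mem_image, Finset.mem_univ, true_and]
      exact ⟨t, a, rfl⟩
    refine ⟨fun a => (T.orderIsoOfFin rfl).symm ⟨i t a, hmem a⟩, fun a => ?_⟩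
    show ((T.orderIsoOfFin rfl) ((T.orderIsoOfFin rfl).symm ⟨i t a, hmem a⟩) : ℤ) = i t a
    rw [OrderIso.apply_symm_apply]

end AuxStmt11

/-- with tight indiscernibles of order type ℤ, the shift
f(i₁,…,iₙ) ↦ f(i₁+1,…,iₙ+1) is a well-defined automorphism of M* fixing M pointwise,
all of whose positive iterates move every element of M* \ M. -/
theorem stmt_11 {L : Language} {N : Type*} [L.Structure N]
    (S : L.ElementarySubstructure N) (e : ℤ → N)
    (hinj : Function.Injective e) (hdisj : ∀ z : ℤ, e z ∉ S)
    (hskolem : HasDefSkolem L (S : Set N))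
    (hind : OrderIndisc L (S : Set N) e)
    (hgen : GeneratedBy L (S : Set N) e)
    (htight : TightProp L (S : Set N) e) :
    ∃ α : N ≃[L] N,
      (∀ m : N, m ∈ S → α m = m) ∧
      (∀ (k : ℕ) (f : (Fin k → N) → N), ParamDefFun L (S : Set N) k f →
        ∀ i : Fin k → ℤ, StrictMono i →
          α (f (e ∘ i)) = f (e ∘ fun t => i t + 1)) ∧
      (∀ k : ℕ, 0 < k → ∀ x : N, x ∉ S → (fun y => α y)^[k] x ≠ x) := by
  classical
  -- The shift maps
  obtain ⟨sh, hsh⟩ : ∃ sh : ℤ → N → N, ∀ (c : ℤ) (a : N) {k' : ℕ} (f' : (Fin k' → N) → N),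
      ParamDefFun L (S : Set N) k' f' → ∀ (i' : Fin k' → ℤ), StrictMono i' →
      f' (e ∘ i') = a → sh c a = f' (e ∘ fun t => i' t + c) := by
    choose ar F hF idx hmono hval using hgen
    refine ⟨fun c a => F a (e ∘ fun t => idx a t + c), ?_⟩
    intro c a k' f' hf' i' hi' ha
    exact Stmt11.shift_eq hind (hF a) hf' (hmono a) hi' ((hval a).trans ha.symm) c
  -- Basic facts about the shifts
  have h0 : ∀ a, sh 0 a = a := by
    intro a
    obtain ⟨k₀, f₀, hf₀, i₀, hi₀, hv₀⟩ := hgen a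
    have h := hsh 0 a f₀ hf₀ i₀ hi₀ hv₀
    simpa [hv₀] using h
  have hc : ∀ (c d : ℤ) (a : N), sh c (sh d a) = sh (c + d) a := by
    intro c d a
    obtain ⟨k₀, f₀, hf₀, i₀, hi₀, hv₀⟩ := hgen a
    have hmono' : StrictMono (fun t => i₀ t + d) := fun x y hxy => by simpa using hi₀ hxy
    have h1 : sh d a = f₀ (e ∘ fun t => i₀ t + d) := hsh d a f₀ hf₀ i₀ hi₀ hv₀
    have h2 : sh c (sh d a) = f₀ (e ∘ fun t => (i₀ t + d) + c) :=
      hsh c (sh d a) f₀ hf₀ _ hmono' h1.symm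
    have h3 : sh (c + d) a = f₀ (e ∘ fun t => i₀ t + (c + d)) := hsh (c + d) a f₀ hf₀ i₀ hi₀ hv₀
    rw [h2, h3]
    have : (fun t => i₀ t + d + c) = (fun t => i₀ t + (c + d)) := by funext t; ring
    rw [this]
  -- the automorphism
  have hmapf : ∀ (n : ℕ) (Fn : L.Functions n) (x : Fin n → N),
      sh 1 (Structure.funMap Fn x) = Structure.funMap Fn (fun t => sh 1 (x t)) := by
    intro n Fn x
    choose k1 f1 hf1 i1 hi1 hv1 using fun t : Fin n => hgen (x t)
    obtain ⟨n', m, hm, hσ⟩ := Stmt11.merge_tuples (k := k1) i1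
    choose σ hσ using hσ
    set g : Fin n → ((Fin n' → N) → N) := fun t v => f1 t (v ∘ σ t) with hg
    have hgd : ∀ t, ParamDefFun L (S : Set N) n' (g t) :=
      fun t => Stmt11.ParamDefFun.reindex (hf1 t) (σ t)
    have hcomp : ∀ (τ : Fin n' → ℤ) (t : Fin n), g t (e ∘ τ) = f1 t (e ∘ (τ ∘ σ t)) := by
      intro τ t; rfl
    have hem : ∀ t, (e ∘ m) ∘ σ t = e ∘ i1 t := by
      intro t; ext a; simp [hσ]
    have hxg : ∀ t, g t (e ∘ m) = x t := by
      intro t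
      show f1 t ((e ∘ m) ∘ σ t) = x t
      rw [hem t, hv1 t]
    have hmono1 : StrictMono (fun a => m a + (1 : ℤ)) := fun a b hab => by simpa using hm hab
    have hhd : ParamDefFun L (S : Set N) n' (fun v => Structure.funMap Fn (fun t => g t v)) :=
      Stmt11.paramDefFun_funMap Fn hgd
    have hvalh : (fun v => Structure.funMap Fn (fun t => g t v)) (e ∘ m)
        = Structure.funMap Fn x := by
      show Structure.funMap Fn (fun t => g t (e ∘ m)) = Structure.funMap Fn x
      rw [show (fun t => g t (e ∘ m)) = x from funext fun t => hxg t]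
    have h1 := hsh 1 (Structure.funMap Fn x) _ hhd m hm hvalh
    have h2 : ∀ t, sh 1 (x t) = g t (e ∘ fun a => m a + 1) :=
      fun t => hsh 1 (x t) (g t) (hgd t) m hm (hxg t)
    rw [h1]
    show Structure.funMap Fn (fun t => g t (e ∘ fun a => m a + 1)) = _
    rw [show (fun t => g t (e ∘ fun a => m a + 1)) = (fun t => sh 1 (x t))
      from funext fun t => (h2 t).symm]
  have hmapr : ∀ (n : ℕ) (r : L.Relations n) (x : Fin n → N),
      Structure.RelMap r (fun t => sh 1 (x t)) ↔ Structure.RelMap r x := by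
    intro n r x
    choose k1 f1 hf1 i1 hi1 hv1 using fun t : Fin n => hgen (x t)
    obtain ⟨n', m, hm, hσ⟩ := Stmt11.merge_tuples (k := k1) i1
    choose σ hσ using hσ
    set g : Fin n → ((Fin n' → N) → N) := fun t v => f1 t (v ∘ σ t) with hg
    have hgd : ∀ t, ParamDefFun L (S : Set N) n' (g t) :=
      fun t => Stmt11.ParamDefFun.reindex (hf1 t) (σ t)
    have hem : ∀ t, (e ∘ m) ∘ σ t = e ∘ i1 t := by
      intro t; ext a; simp [hσ]
    have hxg : ∀ t, g t (e ∘ m) = x t := by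
      intro t
      show f1 t ((e ∘ m) ∘ σ t) = x t
      rw [hem t, hv1 t]
    have hmono1 : StrictMono (fun a => m a + (1 : ℤ)) := fun a b hab => by simpa using hm hab
    have hs0 : Set.Definable (S : Set N) L {y : Fin n → N | Structure.RelMap r y} := by
      have h := Stmt11.definable_of_formula (A := (S : Set N))
        (r.formula var : L.Formula (Fin n))
      convert h using 1
      rfl
    have hdef := Stmt11.definable_comp hgd hs0
    have htrans := Stmt11.definable_transfer hind hdef hm hmono1
    have h2 : ∀ t, sh 1 (x t) = g t (e ∘ fun a => m a + 1) :=
      fun t => hsh 1 (x t) (g t) (hgd t) m hm (hxg t)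
    have hfun1 : (fun t => sh 1 (x t)) = fun u => g u (e ∘ fun a => m a + 1) :=
      funext fun t => h2 t
    have hfun0 : x = fun u => g u (e ∘ m) := funext fun t => (hxg t).symm
    rw [hfun1, hfun0]
    exact htrans.symm
  set αe : N ≃[L] N :=
    { toFun := sh 1
      invFun := sh (-1)
      left_inv := fun a => by rw [hc]; norm_num [h0]
      right_inv := fun a => by rw [hc]; norm_num [h0]
      map_fun' := fun {n} Fn x => hmapf n Fn x
      map_rel' := fun {n} r x => hmapr n r x } with hαe
  have hcoe : ∀ y : N, αe y = sh 1 y := fun y => rfl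
  have hiter : ∀ (c : ℕ) (a : N), (fun y => αe y)^[c] a = sh (c : ℤ) a := by
    intro c
    induction c with
    | zero => intro a; simp [h0]
    | succ c ih =>
      intro a
      rw [Function.iterate_succ_apply', ih a, hcoe, hc]
      congr 1
      push_cast
      ring
  refine ⟨αe, ?_, ?_, ?_⟩
  · -- fixes S pointwise
    intro m₀ hm₀
    have hf₀ : ParamDefFun L (S : Set N) 0 (fun _ : Fin 0 → N => m₀) := by
      refine ⟨Term.equal (var (Fin.last 0)) ((L.con (⟨m₀, hm₀⟩ : ↥(S : Set N))).term), ?_⟩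
      ext x
      simp only [Set.mem_setOf_eq, Formula.realize_equal, Term.realize_var, Term.realize_con]
    have hi₀ : StrictMono (fun a : Fin 0 => (0 : ℤ)) := fun a => a.elim0
    have h := hsh 1 m₀ (fun _ : Fin 0 → N => m₀) hf₀ (fun _ => 0) hi₀ rfl
    exact h
  · -- shift formula
    intro k f hdef i hi
    exact hsh 1 (f (e ∘ i)) f hdef i hi rfl
  · -- all positive iterates move every element outside S
    intro k hk x hx hcon
    rw [hiter k x] at hcon
    obtain ⟨r, f₀, hf₀, i₀, hi₀, hv₀⟩ := hgen x
    have hshx : sh (k : ℤ) x = f₀ (e ∘ fun t => i₀ t + k) := hsh (k : ℤ) x f₀ hf₀ i₀ hi₀ hv₀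
    have heqk : f₀ (e ∘ fun t => i₀ t + (k : ℤ)) = f₀ (e ∘ i₀) := by
      rw [← hshx, hcon, ← hv₀]
    have hmonok : StrictMono (fun t => i₀ t + (k : ℤ)) := fun a b hab => by simpa using hi₀ hab
    have claim : ∀ M : ℕ, f₀ (e ∘ fun t => i₀ t + (M : ℤ) * k) = x := by
      intro M
      induction M with
      | zero => simpa using hv₀
      | succ M ih =>
        have h := Stmt11.shift_eq hind hf₀ hf₀ hmonok hi₀ heqk ((M : ℤ) * k)
        have h2 : (fun t => (i₀ t + (k : ℤ)) + (M : ℤ) * k)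
            = fun t => i₀ t + ((M : ℤ) + 1) * k := by
          ext t; ring
        rw [h2] at h
        rw [show ((M + 1 : ℕ) : ℤ) = (M : ℤ) + 1 by push_cast; ring]
        rw [h]
        exact ih
    obtain ⟨D, hD⟩ : ∃ D : ℕ, ∀ a b : Fin r, i₀ a < i₀ b + (D : ℤ) * k := by
      rcases isEmpty_or_nonempty (Fin r) with he | hne
      · exact ⟨1, fun a => isEmptyElim a⟩
      · obtain ⟨⟨a₀, b₀⟩, hmax⟩ :=
          Finite.exists_max (fun p : Fin r × Fin r => i₀ p.1 - i₀ p.2)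
        refine ⟨(i₀ a₀ - i₀ b₀).toNat + 1, fun a b => ?_⟩
        have h1 : i₀ a - i₀ b ≤ i₀ a₀ - i₀ b₀ := hmax (a, b)
        have h2 : (i₀ a₀ - i₀ b₀) ≤ ((i₀ a₀ - i₀ b₀).toNat : ℤ) := Int.self_le_toNat _
        have h3 : (1 : ℤ) ≤ (k : ℤ) := by exact_mod_cast hk
        have h4 : (((i₀ a₀ - i₀ b₀).toNat + 1 : ℕ) : ℤ)
            = ((i₀ a₀ - i₀ b₀).toNat : ℤ) + 1 := by push_cast; ring
        rw [h4]
        nlinarith [Int.natCast_nonneg ((i₀ a₀ - i₀ b₀).toNat)]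
    have hmonoD : StrictMono (fun t => i₀ t + (D : ℤ) * k) := fun a b hab => by
      simpa using hi₀ hab
    have hmem := htight r f₀ hf₀ i₀ (fun t => i₀ t + (D : ℤ) * k) hi₀ hmonoD hD
      (hv₀.trans (claim D).symm)
    rw [hv₀] at hmem
    exact hx hmem
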